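/- The function α(β) = β²/2 + log Φ̄((τ-β)/√(1+η²)), where Φ̄ is the standard normal survival function, is strongly convex on ℝ with convexity parameter η²/(1+η²); i.e., α''(β) ≥ η²/(1+η²) for all β ∈ ℝ. -/

import Mathlib

noncomputable def phi (x : ℝ) : ℝ := (Real.sqrt (2 * Real.pi))⁻¹ * Real.exp (-x ^ 2 / 2)

noncomputable def Phibar (x : ℝ) : ℝ := ∫ t in Set.Ioi x, phi t

open Real MeasureTheory Filter Set Topology

lemma phi_eq : phi = fun x => (Real.sqrt (2 * Real.pi))⁻¹ * Real.exp (-(1/2) * x ^ 2) := by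
  funext x; simp only [phi]; ring_nf

lemma phi_pos (x : ℝ) : 0 < phi x :=
  mul_pos (inv_pos.2 (Real.sqrt_pos.2 (by positivity))) (Real.exp_pos _)

lemma hasDerivAt_phi (x : ℝ) : HasDerivAt phi (-x * phi x) x := by
  have h : HasDerivAt (fun x : ℝ => -x ^ 2 / 2) (-x) x := by
    have := ((hasDerivAt_pow 2 x).neg.div_const 2)
    refine HasDerivAt.congr_deriv (this : HasDerivAt (fun x : ℝ => -x ^ 2 / 2) _ x) ?_; ring
  have h2 := (h.exp).const_mul (Real.sqrt (2 * Real.pi))⁻¹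
  have : phi = fun y => (Real.sqrt (2 * Real.pi))⁻¹ * Real.exp (-y ^ 2 / 2) := rfl
  rw [this]
  refine HasDerivAt.congr_deriv (h2 : HasDerivAt (fun y => (Real.sqrt (2 * Real.pi))⁻¹ * Real.exp (-y ^ 2 / 2)) _ x) ?_
  simp only [phi]; ring

lemma continuous_phi : Continuous phi := by
  rw [phi_eq]; continuity

lemma integrable_phi : Integrable phi := by
  rw [phi_eq]
  exact (integrable_exp_neg_mul_sq (by norm_num : (0:ℝ) < 1/2)).const_mul _

lemma integral_phi : ∫ x, phi x = 1 := by
  rw [phi_eq]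
  rw [integral_const_mul, integral_gaussian]
  rw [show π / (1/2) = 2 * π by ring]
  rw [inv_mul_cancel₀ (by positivity)]

lemma Phibar_nonneg (x : ℝ) : 0 ≤ Phibar x :=
  setIntegral_nonneg measurableSet_Ioi (fun t _ => (phi_pos t).le)

lemma Phibar_pos (x : ℝ) : 0 < Phibar x := by
  rw [Phibar]
  refine (setIntegral_pos_iff_support_of_nonneg_ae ?_ integrable_phi.integrableOn).2 ?_
  · exact Filter.Eventually.of_forall fun t => (phi_pos t).le
  · have : Function.support phi = Set.univ := by
      ext t; simp [Function.mem_support, (phi_pos t).ne']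
    rw [this, Set.univ_inter]
    simp [Real.volume_Ioi]

lemma Phibar_le_one (x : ℝ) : Phibar x ≤ 1 := by
  rw [Phibar, ← integral_phi]
  exact setIntegral_le_integral integrable_phi (Filter.Eventually.of_forall fun t => (phi_pos t).le)

lemma Phibar_split {a b : ℝ} (h : a ≤ b) :
    Phibar a = (∫ t in Set.Ioc a b, phi t) + Phibar b := by
  rw [Phibar, Phibar, ← setIntegral_union (Set.Ioc_disjoint_Ioi le_rfl) measurableSet_Ioi
    integrable_phi.integrableOn integrable_phi.integrableOn, Set.Ioc_union_Ioi_eq_Ioi h]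

lemma Phibar_eq (x : ℝ) : Phibar x = Phibar 0 - ∫ t in (0:ℝ)..x, phi t := by
  rcases le_total 0 x with h | h
  · rw [intervalIntegral.integral_of_le h]
    have := Phibar_split h
    linarith
  · rw [intervalIntegral.integral_symm, intervalIntegral.integral_of_le h]
    have := Phibar_split h
    linarith

lemma hasDerivAt_Phibar (x : ℝ) : HasDerivAt Phibar (-phi x) x := by
  have h1 : HasDerivAt (fun y => ∫ t in (0:ℝ)..y, phi t) (phi x) x :=
    intervalIntegral.integral_hasDerivAt_right integrable_phi.intervalIntegrable
      continuous_phi.aestronglyMeasurable.stronglyMeasurableAtFilter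
      continuous_phi.continuousAt
  have h2 : HasDerivAt (fun y => Phibar 0 - ∫ t in (0:ℝ)..y, phi t) (0 - phi x) x :=
    (hasDerivAt_const x (Phibar 0)).sub h1
  have h3 : (fun y => Phibar 0 - ∫ t in (0:ℝ)..y, phi t) = Phibar :=
    funext fun y => (Phibar_eq y).symm
  rw [h3] at h2
  simpa using h2

lemma continuous_Phibar : Continuous Phibar :=
  continuous_iff_continuousAt.2 fun x => (hasDerivAt_Phibar x).continuousAt

lemma integrable_mul_phi : Integrable (fun t : ℝ => t * phi t) := by
  have h := (integrable_mul_exp_neg_mul_sq (by norm_num : (0:ℝ) < 1/2)).const_mul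
    (Real.sqrt (2 * Real.pi))⁻¹
  refine h.congr (Filter.Eventually.of_forall fun t => ?_)
  simp only [phi]; ring_nf

lemma integrable_sq_mul_phi : Integrable (fun t : ℝ => t ^ 2 * phi t) := by
  have h0 : Integrable (fun t : ℝ => t ^ 2 * Real.exp (-(1/2) * t ^ 2)) := by
    have h := integrable_rpow_mul_exp_neg_mul_sq (b := 1/2) (by norm_num) (s := ((2:ℕ):ℝ))
      (by norm_num)
    simp only [Real.rpow_natCast] at h
    exact h.congr (Filter.Eventually.of_forall fun t => by norm_num)
  have h := h0.const_mul (Real.sqrt (2 * Real.pi))⁻¹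
  refine h.congr (Filter.Eventually.of_forall fun t => ?_)
  simp only [phi]; ring_nf

lemma tendsto_phi : Filter.Tendsto phi Filter.atTop (nhds 0) := by
  have h1 : Filter.Tendsto (fun x : ℝ => -x ^ 2 / 2) Filter.atTop Filter.atBot := by
    apply Filter.Tendsto.atBot_div_const (by norm_num)
    exact Filter.tendsto_neg_atBot_iff.2 (tendsto_pow_atTop (by norm_num))
  have h2 := Real.tendsto_exp_atBot.comp h1
  simp only [Function.comp_def] at h2
  have h3 := h2.const_mul (Real.sqrt (2 * Real.pi))⁻¹
  rw [mul_zero] at h3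
  exact h3

lemma integral_mul_phi (a : ℝ) : ∫ t in Set.Ioi a, t * phi t = phi a := by
  have h := integral_Ioi_of_hasDerivAt_of_tendsto' (f := fun t => -phi t)
    (f' := fun t => t * phi t) (a := a) (m := 0)
    (fun x _ => by
      have := (hasDerivAt_phi x).neg; simp only [neg_mul, neg_neg] at this; exact this)
    integrable_mul_phi.integrableOn
    (by simpa using tendsto_phi.neg)
  simpa using h

lemma phi_le_one (t : ℝ) : phi t ≤ 1 := by
  have h1 : Real.exp (-t ^ 2 / 2) ≤ 1 := by
    rw [show (1:ℝ) = Real.exp 0 by simp]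
    exact Real.exp_le_exp.2 (by nlinarith [sq_nonneg t])
  have h2 : (Real.sqrt (2 * Real.pi))⁻¹ ≤ 1 := by
    rw [inv_le_one_iff₀]
    right
    rw [show (1:ℝ) = Real.sqrt 1 by simp]
    exact Real.sqrt_le_sqrt (by nlinarith [Real.pi_gt_three])
  calc phi t ≤ (Real.sqrt (2 * Real.pi))⁻¹ * 1 := by
        exact mul_le_mul_of_nonneg_left h1 (by positivity)
    _ ≤ 1 := by simpa using h2

lemma mills1 (u : ℝ) : u * Phibar u ≤ phi u := by
  rcases le_or_gt u 0 with h | h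
  · exact (mul_nonpos_of_nonpos_of_nonneg h (Phibar_nonneg u)).trans (phi_pos u).le
  · have h1 : ∫ t in Set.Ioi u, u * phi t ≤ ∫ t in Set.Ioi u, t * phi t := by
      refine setIntegral_mono_on (integrable_phi.integrableOn.const_mul u)
        integrable_mul_phi.integrableOn measurableSet_Ioi (fun t ht => ?_)
      exact mul_le_mul_of_nonneg_right (le_of_lt ht) (phi_pos t).le
    rw [MeasureTheory.integral_const_mul, integral_mul_phi] at h1
    rw [Phibar]
    exact h1

lemma tendsto_Phibar : Filter.Tendsto Phibar Filter.atTop (nhds 0) := by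
  apply tendsto_of_tendsto_of_tendsto_of_le_of_le' tendsto_const_nhds tendsto_phi
  · exact Filter.Eventually.of_forall fun u => Phibar_nonneg u
  · filter_upwards [Filter.eventually_ge_atTop (1:ℝ)] with u hu
    nlinarith [mills1 u, Phibar_nonneg u]

lemma mills2 (u : ℝ) : u * phi u ≤ (1 + u ^ 2) * Phibar u := by
  have hden : ∀ t : ℝ, (0:ℝ) < 1 + t ^ 2 := fun t => by positivity
  set f : ℝ → ℝ := fun t => -(t / (1 + t ^ 2)) * phi t with hf
  have hder : ∀ t : ℝ, HasDerivAt f ((1 - 2 / (1 + t ^ 2) ^ 2) * phi t) t := by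
    intro t
    have h2 : HasDerivAt (fun t : ℝ => 1 + t ^ 2) (2 * t) t := by
      simpa using (hasDerivAt_pow 2 t).const_add 1
    have h1 : HasDerivAt (fun t : ℝ => -(t / (1 + t ^ 2)))
        (-((1 * (1 + t ^ 2) - t * (2 * t)) / (1 + t ^ 2) ^ 2)) t :=
      ((hasDerivAt_id t).div h2 (hden t).ne').neg
    have := h1.mul (hasDerivAt_phi t)
    refine HasDerivAt.congr_deriv (this : HasDerivAt (fun t => -(t / (1 + t ^ 2)) * phi t) _ t) ?_
    field_simp
    ring
  have hint : IntegrableOn (fun t : ℝ => (1 - 2 / (1 + t ^ 2) ^ 2) * phi t) (Set.Ioi u) := by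
    refine Integrable.mono integrable_phi.integrableOn ?_ ?_
    · refine Continuous.aestronglyMeasurable ?_
      exact (continuous_const.sub (continuous_const.div
        (by continuity) (fun t => by positivity))).mul continuous_phi
    · refine Filter.Eventually.of_forall fun t => ?_
      rw [Real.norm_eq_abs, Real.norm_eq_abs, abs_mul, abs_of_pos (phi_pos t)]
      have h1 : |1 - 2 / (1 + t ^ 2) ^ 2| ≤ 1 := by
        rw [abs_le]
        constructor
        · have : 2 / (1 + t ^ 2) ^ 2 ≤ 2 := by
            rw [div_le_iff₀ (by positivity)]
            nlinarith [sq_nonneg t, sq_nonneg (t^2)]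
          linarith
        · have : 0 < 2 / (1 + t ^ 2) ^ 2 := by positivity
          linarith
      calc |1 - 2 / (1 + t ^ 2) ^ 2| * phi t ≤ 1 * phi t :=
            mul_le_mul_of_nonneg_right h1 (phi_pos t).le
        _ = phi t := one_mul _

  have hlim : Filter.Tendsto f Filter.atTop (nhds 0) := by
    have hnegphi : Filter.Tendsto (fun t => -phi t) Filter.atTop (nhds 0) := by
      simpa using tendsto_phi.neg
    apply tendsto_of_tendsto_of_tendsto_of_le_of_le' hnegphi tendsto_phi
    · filter_upwards [Filter.eventually_ge_atTop (0:ℝ)] with t ht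
      have h1 : t / (1 + t ^ 2) ≤ 1 := by
        rw [div_le_one (hden t)]
        nlinarith [sq_nonneg (t - 1)]
      have h2 : 0 ≤ t / (1 + t ^ 2) := div_nonneg ht (hden t).le
      simp only [hf, neg_mul]
      nlinarith [phi_pos t]
    · filter_upwards [Filter.eventually_ge_atTop (0:ℝ)] with t ht
      have h2 : 0 ≤ t / (1 + t ^ 2) := div_nonneg ht (hden t).le
      simp only [hf, neg_mul]
      nlinarith [phi_pos t]
  have heq := integral_Ioi_of_hasDerivAt_of_tendsto' (f := f)
    (f' := fun t => (1 - 2 / (1 + t ^ 2) ^ 2) * phi t) (a := u) (m := 0)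
    (fun x _ => hder x) hint hlim
  have hle : ∫ t in Set.Ioi u, (1 - 2 / (1 + t ^ 2) ^ 2) * phi t ≤ Phibar u := by
    rw [Phibar]
    refine setIntegral_mono_on hint integrable_phi.integrableOn measurableSet_Ioi
      (fun t _ => ?_)
    nlinarith [phi_pos t, div_nonneg (by norm_num : (0:ℝ) ≤ 2) (sq_nonneg (1 + t ^ 2)),
      (phi_pos t).le]
  rw [heq] at hle
  simp only [hf, zero_sub, neg_neg] at hle
  have hle2 : u / (1 + u ^ 2) * phi u ≤ Phibar u := by linarith [hle]
  rw [div_mul_eq_mul_div, div_le_iff₀ (hden u)] at hle2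
  nlinarith [hle2]

lemma key_ineq (u : ℝ) : phi u ^ 2 ≤ Phibar u ^ 2 + u * phi u * Phibar u := by
  set g : ℝ → ℝ := fun t => Phibar t ^ 2 + t * phi t * Phibar t - phi t ^ 2 with hgdef
  set g' : ℝ → ℝ := fun t => -(phi t * ((1 + t ^ 2) * Phibar t - t * phi t)) with hg'def
  have hder : ∀ t : ℝ, HasDerivAt g (g' t) t := by
    intro t
    have hP := hasDerivAt_Phibar t
    have hp := hasDerivAt_phi t
    have h1 := hP.pow 2
    have h2 := ((hasDerivAt_id' (x := t)).mul hp).mul hP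
    have h3 := hp.pow 2
    have h := (h1.add h2).sub h3
    refine HasDerivAt.congr_deriv (h : HasDerivAt (fun t => Phibar t ^ 2 + t * phi t * Phibar t - phi t ^ 2) _ t) ?_
    simp only [hg'def]
    simp only [Pi.mul_apply]
    ring
  have hcomp : Integrable (fun t : ℝ => phi t + t ^ 2 * phi t + |t * phi t|) :=
    (integrable_phi.add integrable_sq_mul_phi).add integrable_mul_phi.abs
  have hint : IntegrableOn g' (Set.Ioi u) := by
    refine Integrable.mono hcomp.integrableOn ?_ ?_
    · refine Continuous.aestronglyMeasurable ?_
      simp only [hg'def]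
      exact ((continuous_phi.mul (((continuous_const.add (continuous_pow 2)).mul
        continuous_Phibar).sub (continuous_id.mul continuous_phi)))).neg
    · refine Filter.Eventually.of_forall fun t => ?_
      simp only [hg'def, Real.norm_eq_abs]
      have hA := phi_pos t
      have hA1 := phi_le_one t
      have hB0 := Phibar_nonneg t
      have hB1 := Phibar_le_one t
      have h1 : |t * phi t| * phi t ≤ |t * phi t| * 1 :=
        mul_le_mul_of_nonneg_left hA1 (abs_nonneg _)
      have h2 : t * phi t * phi t ≤ |t * phi t| * phi t :=
        mul_le_mul_of_nonneg_right (le_abs_self _) hA.le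
      have h3 : -(|t * phi t| * phi t) ≤ t * phi t * phi t := by
        nlinarith [neg_abs_le (t * phi t)]
      have hrhs : 0 ≤ phi t + t ^ 2 * phi t + |t * phi t| := by positivity
      rw [abs_of_nonneg hrhs, abs_le]
      constructor
      · nlinarith [mul_nonneg hB0 hA.le, mul_nonneg (mul_nonneg (sq_nonneg t) hA.le) hB0,
          mul_le_mul_of_nonneg_left hB1 hA.le,
          mul_le_mul_of_nonneg_left hB1 (mul_nonneg (sq_nonneg t) hA.le)]
      · nlinarith [mul_nonneg hB0 hA.le, mul_nonneg (mul_nonneg (sq_nonneg t) hA.le) hB0]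
  have hmid : Filter.Tendsto (fun t => t * phi t * Phibar t) Filter.atTop (nhds 0) := by
    have hub : Filter.Tendsto (fun t => phi t * phi t) Filter.atTop (nhds 0) := by
      have := tendsto_phi.mul tendsto_phi
      simpa using this
    apply tendsto_of_tendsto_of_tendsto_of_le_of_le' tendsto_const_nhds hub
    · filter_upwards [Filter.eventually_ge_atTop (0:ℝ)] with t ht
      exact mul_nonneg (mul_nonneg ht (phi_pos t).le) (Phibar_nonneg t)
    · filter_upwards [Filter.eventually_ge_atTop (0:ℝ)] with t ht
      nlinarith [mills1 t, phi_pos t, Phibar_nonneg t]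
  have hg : Filter.Tendsto g Filter.atTop (nhds 0) := by
    have h := ((tendsto_Phibar.pow 2).add hmid).sub (tendsto_phi.pow 2)
    norm_num at h
    exact h
  have heq := integral_Ioi_of_hasDerivAt_of_tendsto' (f := g) (f' := g') (a := u) (m := 0)
    (fun x _ => hder x) hint hg
  have hnonpos : ∫ t in Set.Ioi u, g' t ≤ 0 := by
    refine setIntegral_nonpos measurableSet_Ioi (fun t _ => ?_)
    simp only [hg'def]
    have := mills2 t
    nlinarith [phi_pos t, mul_nonneg (phi_pos t).le (by nlinarith [mills2 t] :
      (0:ℝ) ≤ (1 + t ^ 2) * Phibar t - t * phi t)]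
  have hgu : 0 ≤ g u := by
    rw [heq] at hnonpos
    linarith
  simp only [hgdef] at hgu
  linarith

/-- The function `α(β) = β²/2 + log Φ̄((τ-β)/√(1+η²))` is strongly convex with
parameter `η²/(1+η²)`: its second derivative is bounded below by `η²/(1+η²)`. -/
theorem stmt0 (τ η : ℝ) (hη : 0 < η) (β : ℝ) :
    η ^ 2 / (1 + η ^ 2) ≤
      deriv (deriv (fun b : ℝ =>
        b ^ 2 / 2 + Real.log (Phibar ((τ - b) / Real.sqrt (1 + η ^ 2))))) β := by
  set c : ℝ := Real.sqrt (1 + η ^ 2) with hcdef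
  have hc : 0 < c := Real.sqrt_pos.2 (by positivity)
  have hc2 : c ^ 2 = 1 + η ^ 2 := Real.sq_sqrt (by positivity)
  set u : ℝ → ℝ := fun b => (τ - b) / c with hudef
  have hu : ∀ b : ℝ, HasDerivAt u (-1 / c) b := by
    intro b
    have h := ((hasDerivAt_const b τ).sub (hasDerivAt_id' (x := b))).div_const c
    simpa using h
  set D1 : ℝ → ℝ := fun b => b + phi (u b) * (c * Phibar (u b))⁻¹ with hD1def
  have hF1 : ∀ b : ℝ, HasDerivAt (fun b : ℝ =>
      b ^ 2 / 2 + Real.log (Phibar ((τ - b) / Real.sqrt (1 + η ^ 2)))) (D1 b) b := by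
    intro b
    have hsq : HasDerivAt (fun b : ℝ => b ^ 2 / 2) b b := by
      simpa using (hasDerivAt_pow 2 b).div_const 2
    have hPb : HasDerivAt (fun b : ℝ => Phibar (u b)) (-phi (u b) * (-1 / c)) b :=
      (hasDerivAt_Phibar (u b)).comp b (hu b)
    have hlog : HasDerivAt (fun b : ℝ => Real.log (Phibar (u b)))
        ((Phibar (u b))⁻¹ * (-phi (u b) * (-1 / c))) b :=
      by have := (Real.hasDerivAt_log (Phibar_pos (u b)).ne').comp b hPb; exact this
    have h := hsq.add hlog
    refine HasDerivAt.congr_deriv (h : HasDerivAt (fun b => b ^ 2 / 2 + Real.log (Phibar (u b))) _ b) ?_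
    simp only [hD1def]
    field_simp
  have hderivF : deriv (fun b : ℝ =>
      b ^ 2 / 2 + Real.log (Phibar ((τ - b) / Real.sqrt (1 + η ^ 2)))) = D1 :=
    funext fun b => (hF1 b).deriv
  set y : ℝ := u β with hydef
  set A : ℝ := phi y with hAdef
  set B : ℝ := Phibar y with hBdef
  have hApos : 0 < A := phi_pos y
  have hBpos : 0 < B := Phibar_pos y
  have hD2 : HasDerivAt D1 (1 + (y * A * B - A ^ 2) / (c ^ 2 * B ^ 2)) β := by
    have hphi_comp : HasDerivAt (fun b : ℝ => phi (u b)) (-y * A * (-1 / c)) β :=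
      by have := (hasDerivAt_phi y).comp β (hu β); exact this
    have hPb : HasDerivAt (fun b : ℝ => Phibar (u b)) (-A * (-1 / c)) β :=
      by have := (hasDerivAt_Phibar y).comp β (hu β); exact this
    have hcPb : HasDerivAt (fun b : ℝ => c * Phibar (u b)) (c * (-A * (-1 / c))) β :=
      hPb.const_mul c
    have hinv : HasDerivAt (fun b : ℝ => (c * Phibar (u b))⁻¹)
        (-(c * (-A * (-1 / c))) / (c * B) ^ 2) β :=
      hcPb.inv (by positivity)
    have h := (hasDerivAt_id' (x := β)).add (hphi_comp.mul hinv)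
    refine HasDerivAt.congr_deriv (h : HasDerivAt (fun b => b + phi (u b) * (c * Phibar (u b))⁻¹) _ β) ?_
    rw [← hydef, ← hAdef, ← hBdef]
    field_simp
    ring
  rw [hderivF, hD2.deriv]
  have hkey : A ^ 2 ≤ B ^ 2 + y * A * B := key_ineq y
  have h1 : -1 / c ^ 2 ≤ (y * A * B - A ^ 2) / (c ^ 2 * B ^ 2) := by
    rw [div_le_div_iff₀ (by positivity) (by positivity)]
    nlinarith [mul_nonneg (by positivity : (0:ℝ) ≤ c ^ 2)
      (by linarith : (0:ℝ) ≤ B ^ 2 + y * A * B - A ^ 2)]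
  have h2 : η ^ 2 / (1 + η ^ 2) = 1 - 1 / (1 + η ^ 2) := by
    field_simp
    ring
  rw [h2, ← hc2]
  have h3 : -1 / c ^ 2 = -(1 / c ^ 2) := by ring
  linarith [h1]
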